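/- Let 1 < α < 2 and let X, X̃ be nonnegative random variables with E(X(log_+ X)^α + X̃(log_+ X̃)^{α−1}) < ∞. Then: (i) E(X(log_+ X̃)^α) < ∞ and E(X̃(log_+ X)^{α−1}) < ∞; (ii) as z → ∞, E(X (log_+(X + X̃))^α · min(log_+(X + X̃), z)) = o(z) and E(X̃ (log_+(X + X̃))^{α−1} · min(log_+(X + X̃), z)) = o(z). -/

import Mathlib

open MeasureTheory ProbabilityTheory Filter Asymptotics Real
open scoped ENNReal ProbabilityTheory

noncomputable def sL (y : ℝ) : ℝ := max 0 (Real.log y)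

lemma sL_nonneg (y : ℝ) : 0 ≤ sL y := le_max_left _ _

lemma sL_mono {a b : ℝ} (ha : 0 ≤ a) (hab : a ≤ b) : sL a ≤ sL b := by
  rcases eq_or_lt_of_le ha with h | h
  · simp [sL, ← h, Real.log_zero]
  · exact max_le_max le_rfl ((Real.log_le_log_iff h (lt_of_lt_of_le h hab)).mpr hab)

lemma sL_eq_log {y : ℝ} (hy : 1 ≤ y) : sL y = Real.log y :=
  max_eq_right (Real.log_nonneg hy)

lemma sixteen_le_exp_four : (16:ℝ) ≤ Real.exp 4 := by
  have h1 : (2.7182818283:ℝ) < Real.exp 1 := Real.exp_one_gt_d9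
  have h2 : Real.exp 1 ^ (4:ℕ) = Real.exp 4 := by
    rw [← Real.exp_nat_mul]; norm_num
  have h3 : (2.7182818283:ℝ)^(4:ℕ) ≤ Real.exp 1 ^ (4:ℕ) :=
    pow_le_pow_left₀ (by norm_num) h1.le 4
  rw [h2] at h3; norm_num at h3; linarith

lemma log_le_half {t : ℝ} (ht : 16 ≤ t) : Real.log t ≤ t / 2 := by
  have h0 : (0:ℝ) < t := by linarith
  have hs4 : (4:ℝ) ≤ Real.sqrt t := by
    have h := Real.sqrt_le_sqrt ht
    rwa [show (16:ℝ) = 4^2 by norm_num, Real.sqrt_sq (by norm_num : (0:ℝ) ≤ 4)] at h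
  have hsq : Real.sqrt t * Real.sqrt t = t := Real.mul_self_sqrt h0.le
  have h1 : Real.log (Real.sqrt t) ≤ Real.sqrt t - 1 :=
    Real.log_le_sub_one_of_pos (by positivity)
  have h2 : Real.log (Real.sqrt t) = Real.log t / 2 := Real.log_sqrt h0.le
  nlinarith

lemma two_rpow_le_four {α : ℝ} (hα : α ≤ 2) : (2:ℝ) ^ α ≤ 4 := by
  have h1 : (2:ℝ) ^ α ≤ (2:ℝ) ^ (2:ℝ) :=
    Real.rpow_le_rpow_of_exponent_le one_le_two hα
  have h2 : (2:ℝ) ^ (2:ℝ) = 4 := by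
    rw [show (2:ℝ) = ((2:ℕ):ℝ) from by norm_num]
    rw [Real.rpow_natCast]; norm_num
  linarith

/-- Key pointwise inequality for part (i), first claim. -/
lemma key1 {α : ℝ} (hα1 : 1 < α) (hα2 : α < 2) {a b : ℝ} (ha : 0 ≤ a) (hb : 0 ≤ b) :
    a * sL b ^ α ≤ Real.exp 8 * (a * sL a ^ α + b * sL b ^ (α - 1) + a) := by
  have hαpos : (0:ℝ) ≤ α := by linarith
  have hK16 : (16:ℝ) ≤ Real.exp 8 := by
    have : Real.exp 4 ≤ Real.exp 8 := Real.exp_le_exp.mpr (by norm_num)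
    linarith [sixteen_le_exp_four]
  have hs1 : 0 ≤ a * sL a ^ α := mul_nonneg ha (Real.rpow_nonneg (sL_nonneg _) _)
  have hs2 : 0 ≤ b * sL b ^ (α - 1) := mul_nonneg hb (Real.rpow_nonneg (sL_nonneg _) _)
  by_cases hbound : b ≤ Real.exp (Real.exp 4)
  · -- small b : sL b ≤ exp 4, so sL b ^ α ≤ exp 8
    have h1 : sL b ≤ Real.exp 4 := by
      have h := sL_mono hb hbound
      have h2 : sL (Real.exp (Real.exp 4)) = Real.exp 4 := by
        simp only [sL, Real.log_exp]
        exact max_eq_right (Real.exp_pos 4).le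
      rw [h2] at h; exact h
    have h2 : sL b ^ α ≤ Real.exp 8 := by
      calc sL b ^ α ≤ Real.exp 4 ^ α := Real.rpow_le_rpow (sL_nonneg _) h1 hαpos
        _ ≤ Real.exp 4 ^ (2:ℝ) := Real.rpow_le_rpow_of_exponent_le
              (by linarith [sixteen_le_exp_four]) hα2.le
        _ = Real.exp 8 := by rw [← Real.exp_mul]; norm_num
    calc a * sL b ^ α ≤ a * Real.exp 8 := mul_le_mul_of_nonneg_left h2 ha
      _ = Real.exp 8 * a := mul_comm _ _
      _ ≤ Real.exp 8 * (a * sL a ^ α + b * sL b ^ (α - 1) + a) := by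
          apply mul_le_mul_of_nonneg_left (by linarith) (Real.exp_pos 8).le
  · -- big b
    push_neg at hbound
    have hb0 : (0:ℝ) < b := lt_trans (Real.exp_pos _) hbound
    have ht : Real.exp 4 < Real.log b := by
      have := Real.log_lt_log (Real.exp_pos _) hbound
      rwa [Real.log_exp] at this
    have ht16 : (16:ℝ) ≤ Real.log b := by linarith [sixteen_le_exp_four]
    set t := Real.log b with htdef
    have ht0 : (0:ℝ) < t := by linarith
    have hsLb : sL b = t := max_eq_right ht0.le
    rw [hsLb]
    have hsplit : t ^ α = t * t ^ (α - 1) := by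
      have : t ^ α = t ^ ((1:ℝ) + (α - 1)) := by norm_num
      rw [this, Real.rpow_add ht0, Real.rpow_one]
    by_cases hc : a * t ≤ b
    · -- a * t ≤ b : a t^α ≤ b t^(α-1)
      have hmain : a * t ^ α ≤ b * t ^ (α - 1) := by
        rw [hsplit, ← mul_assoc]
        exact mul_le_mul_of_nonneg_right hc (Real.rpow_nonneg ht0.le _)
      have hu : 0 ≤ b * t ^ (α - 1) := mul_nonneg hb (Real.rpow_nonneg ht0.le _)
      have hgrow : a * sL a ^ α + b * t ^ (α-1) + a ≤
          Real.exp 8 * (a * sL a ^ α + b * t ^ (α-1) + a) :=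
        le_mul_of_one_le_left (by linarith) (by linarith)
      linarith
    · -- a * t > b : then log a ≥ t/2
      push_neg at hc
      have ha0 : (0:ℝ) < a := by
        by_contra h
        push_neg at h
        have : a = 0 := le_antisymm h ha
        rw [this] at hc; simp at hc; linarith
      have hdiv : b / t < a := (div_lt_iff₀ ht0).mpr hc
      have hlog : Real.log (b / t) ≤ Real.log a := by
        rcases eq_or_lt_of_le (le_of_lt hdiv) with h | h
        · rw [h]
        · exact (Real.log_lt_log (by positivity) h).le
      have hlogdiv : Real.log (b / t) = t - Real.log t := by
        rw [Real.log_div hb0.ne' ht0.ne']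
      have hloght : Real.log t ≤ t / 2 := log_le_half ht16
      have hla : t / 2 ≤ Real.log a := by
        rw [hlogdiv] at hlog; linarith
      have hsLa : t / 2 ≤ sL a := le_trans hla (le_max_right _ _)
      have h2a : t ≤ 2 * sL a := by linarith
      have hpow : t ^ α ≤ 4 * sL a ^ α := by
        calc t ^ α ≤ (2 * sL a) ^ α :=
              Real.rpow_le_rpow ht0.le h2a hαpos
          _ = 2 ^ α * sL a ^ α := Real.mul_rpow (by norm_num) (sL_nonneg _)
          _ ≤ 4 * sL a ^ α := mul_le_mul_of_nonneg_right (two_rpow_le_four hα2.le)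
              (Real.rpow_nonneg (sL_nonneg _) _)
      have hu : 0 ≤ b * t ^ (α - 1) := mul_nonneg hb (Real.rpow_nonneg ht0.le _)
      calc a * t ^ α ≤ a * (4 * sL a ^ α) := mul_le_mul_of_nonneg_left hpow ha
        _ = 4 * (a * sL a ^ α) := by ring
        _ ≤ Real.exp 8 * (a * sL a ^ α + b * t ^ (α - 1) + a) := by
            apply mul_le_mul (by linarith) (by linarith) hs1 (by linarith)

/-- Key pointwise inequality for part (i), second claim. -/
lemma key2 {α : ℝ} (hα1 : 1 < α) {a b : ℝ} (ha : 0 ≤ a) (hb : 0 ≤ b) :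
    a * sL b ^ (α - 1) ≤ a * sL a ^ (α - 1) + b * sL b ^ α + b := by
  have hβ : (0:ℝ) ≤ α - 1 := by linarith
  have hs1 : 0 ≤ a * sL a ^ (α - 1) := mul_nonneg ha (Real.rpow_nonneg (sL_nonneg _) _)
  have hs2 : 0 ≤ b * sL b ^ α := mul_nonneg hb (Real.rpow_nonneg (sL_nonneg _) _)
  by_cases hab : b ≤ a
  · have : sL b ^ (α-1) ≤ sL a ^ (α-1) :=
      Real.rpow_le_rpow (sL_nonneg _) (sL_mono hb hab) hβ
    have := mul_le_mul_of_nonneg_left this ha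
    linarith
  · push_neg at hab
    have h1 : a * sL b ^ (α-1) ≤ b * sL b ^ (α-1) :=
      mul_le_mul_of_nonneg_right hab.le (Real.rpow_nonneg (sL_nonneg _) _)
    have h2 : b * sL b ^ (α-1) ≤ b * sL b ^ α + b := by
      by_cases hL : sL b ≤ 1
      · have : sL b ^ (α-1) ≤ 1 := Real.rpow_le_one (sL_nonneg _) hL hβ
        have := mul_le_mul_of_nonneg_left this hb
        linarith
      · push_neg at hL
        have : sL b ^ (α-1) ≤ sL b ^ α :=
          Real.rpow_le_rpow_of_exponent_le hL.le (by linarith)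
        have := mul_le_mul_of_nonneg_left this hb
        linarith
    linarith

lemma sL_add_le {a b : ℝ} (ha : 0 ≤ a) (hb : 0 ≤ b) :
    sL (a + b) ≤ Real.log 2 + sL a + sL b := by
  have hlog2 : (0:ℝ) ≤ Real.log 2 := Real.log_nonneg one_le_two
  have hmax : a + b ≤ 2 * max a b := by
    rcases le_total a b with h | h
    · rw [max_eq_right h]; linarith
    · rw [max_eq_left h]; linarith
  have h1 : sL (a + b) ≤ sL (2 * max a b) :=
    sL_mono (by positivity) hmax
  have h2 : sL (2 * max a b) ≤ Real.log 2 + sL (max a b) := by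
    rcases eq_or_lt_of_le (le_max_of_le_left ha) with h | h
    · rw [← h, mul_zero]
      simp only [sL, Real.log_zero, max_self]
      linarith
    · apply max_le (add_nonneg hlog2 (sL_nonneg _))
      rw [Real.log_mul (by norm_num) h.ne']
      exact add_le_add le_rfl (le_max_right _ _)
  have h3 : sL (max a b) ≤ sL a + sL b := by
    rcases max_choice a b with h | h <;> rw [h]
    · linarith [sL_nonneg b]
    · linarith [sL_nonneg a]
  linarith

lemma rpow_sum3_le {u v w p : ℝ} (hu : 0 ≤ u) (hv : 0 ≤ v) (hw : 0 ≤ w) (hp : 0 ≤ p) :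
    (u + v + w) ^ p ≤ 3 ^ p * (u ^ p + v ^ p + w ^ p) := by
  set m := max u (max v w) with hm
  have hmnn : 0 ≤ m := le_max_of_le_left hu
  have hsum : u + v + w ≤ 3 * m := by
    have h1 : u ≤ m := le_max_left _ _
    have h2 : v ≤ m := le_max_of_le_right (le_max_left _ _)
    have h3 : w ≤ m := le_max_of_le_right (le_max_right _ _)
    linarith
  have hmp : m ^ p ≤ u ^ p + v ^ p + w ^ p := by
    have pu : (0:ℝ) ≤ u ^ p := Real.rpow_nonneg hu _
    have pv : (0:ℝ) ≤ v ^ p := Real.rpow_nonneg hv _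
    have pw : (0:ℝ) ≤ w ^ p := Real.rpow_nonneg hw _
    rcases max_choice u (max v w) with h | h
    · rw [hm, h]; linarith
    · rw [hm, h]
      rcases max_choice v w with h' | h' <;> rw [h'] <;> linarith
  calc (u + v + w) ^ p ≤ (3 * m) ^ p :=
        Real.rpow_le_rpow (by linarith) hsum hp
    _ = 3 ^ p * m ^ p := Real.mul_rpow (by norm_num) hmnn
    _ ≤ 3 ^ p * (u ^ p + v ^ p + w ^ p) :=
        mul_le_mul_of_nonneg_left hmp (Real.rpow_nonneg (by norm_num) _)

lemma meas_aux {Ω : Type} [MeasurableSpace Ω] {f : Ω → ℝ} (hf : Measurable f)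
    {p : ℝ} (hp : 0 ≤ p) : Measurable fun ω => max 0 (Real.log (f ω)) ^ p :=
  (Real.continuous_rpow_const hp).measurable.comp
    (measurable_const.max (Real.measurable_log.comp hf))

/-- The general little-o estimate. -/
lemma littleO_min {Ω : Type} [MeasureSpace Ω] [IsProbabilityMeasure (ℙ : Measure Ω)]
    (G F : Ω → ℝ) (hGmeas : Measurable G) (hFmeas : Measurable F)
    (hGnn : ∀ ω, 0 ≤ G ω) (hFnn : ∀ ω, 0 ≤ F ω) (hGint : Integrable G ℙ) :
    (fun z : ℝ => ∫ ω, G ω * min (F ω) z ∂ℙ) =o[atTop] fun z : ℝ => z := by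
  rw [isLittleO_iff]
  intro ε hε
  set I := ∫ ω, G ω ∂ℙ with hI
  have hInn : 0 ≤ I := integral_nonneg hGnn
  -- the tail function
  set H : ℝ → ℝ := fun c => ∫ ω, Set.indicator {ω | c < F ω} G ω ∂ℙ with hH
  have hsetmeas : ∀ c : ℝ, MeasurableSet {ω | c < F ω} := fun c =>
    measurableSet_lt measurable_const hFmeas
  have hHint : ∀ c : ℝ, Integrable (Set.indicator {ω | c < F ω} G) ℙ := fun c =>
    hGint.indicator (hsetmeas c)
  have hindnn : ∀ c ω, 0 ≤ Set.indicator {ω | c < F ω} G ω := fun c ω =>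
    Set.indicator_nonneg (fun a _ => hGnn a) ω
  have hindle : ∀ c ω, Set.indicator {ω | c < F ω} G ω ≤ G ω := fun c ω =>
    Set.indicator_le_self' (fun a _ => hGnn a) ω
  have hH0 : Tendsto H atTop (nhds 0) := by
    have := MeasureTheory.tendsto_integral_filter_of_dominated_convergence (μ := ℙ)
      (l := atTop) (F := fun (c : ℝ) => Set.indicator {ω | c < F ω} G)
      (f := fun _ => (0:ℝ)) G
      (Filter.Eventually.of_forall fun c => ((hGmeas.indicator (hsetmeas c)).aestronglyMeasurable))
      (Filter.Eventually.of_forall fun c => ae_of_all _ fun ω => by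
        rw [Real.norm_eq_abs, abs_of_nonneg (hindnn c ω)]
        exact hindle c ω)
      hGint
      (ae_of_all _ fun ω => by
        have : ∀ᶠ c in (atTop : Filter ℝ), Set.indicator {ω | c < F ω} G ω = 0 := by
          filter_upwards [eventually_ge_atTop (F ω)] with c hc
          apply Set.indicator_of_notMem
          simp only [Set.mem_setOf_eq, not_lt]
          exact hc
        exact Tendsto.congr' (this.mono fun c hc => hc.symm) tendsto_const_nhds)
    simpa using this
  -- choose c₀
  have hhalf : (0:ℝ) < ε / 2 := by linarith
  obtain ⟨c₀, hc₀⟩ : ∃ c₀ : ℝ, ∀ c ≥ c₀, H c < ε / 2 := by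
    have := hH0.eventually (gt_mem_nhds hhalf)
    exact eventually_atTop.mp this
  -- eventual bound
  have hzbig : ∀ᶠ z : ℝ in atTop, max 1 (max (c₀^2) ((2*I/ε)^2)) ≤ z :=
    eventually_ge_atTop _
  filter_upwards [hzbig] with z hz
  have hz1 : (1:ℝ) ≤ z := le_trans (le_max_left _ _) hz
  have hz0 : (0:ℝ) < z := by linarith
  have hsz : 0 ≤ Real.sqrt z := Real.sqrt_nonneg z
  have hszsq : Real.sqrt z * Real.sqrt z = z := Real.mul_self_sqrt hz0.le
  have hszc₀ : c₀ ≤ Real.sqrt z := by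
    have h1 : c₀^2 ≤ z := le_trans (le_trans (le_max_left _ _) (le_max_right _ _)) hz
    have := Real.sqrt_le_sqrt h1
    rw [Real.sqrt_sq_eq_abs] at this
    exact le_trans (le_abs_self c₀) this
  have hszI : 2 * I / ε ≤ Real.sqrt z := by
    have h1 : (2*I/ε)^2 ≤ z := le_trans (le_trans (le_max_right _ _) (le_max_right _ _)) hz
    have := Real.sqrt_le_sqrt h1
    rw [Real.sqrt_sq_eq_abs] at this
    exact le_trans (le_abs_self _) this
  -- integrability of the LHS integrand
  have hminnn : ∀ ω, 0 ≤ min (F ω) z := fun ω => le_min (hFnn ω) hz0.le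
  have hLHSint : Integrable (fun ω => G ω * min (F ω) z) ℙ := by
    apply Integrable.mono' (hGint.const_mul z)
      ((hGmeas.mul (hFmeas.min measurable_const)).aestronglyMeasurable)
    apply ae_of_all _ fun ω => ?_
    simp only [Pi.mul_apply]
    rw [Real.norm_eq_abs, abs_of_nonneg (mul_nonneg (hGnn ω) (hminnn ω))]
    calc G ω * min (F ω) z ≤ G ω * z :=
          mul_le_mul_of_nonneg_left (min_le_right _ _) (hGnn ω)
      _ = z * G ω := mul_comm _ _
  -- RHS
  have hRHSint : Integrable
      (fun ω => Real.sqrt z * G ω + z * Set.indicator {ω | Real.sqrt z < F ω} G ω) ℙ :=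
    (hGint.const_mul _).add ((hHint _).const_mul z)
  have hptw : ∀ ω, G ω * min (F ω) z ≤
      Real.sqrt z * G ω + z * Set.indicator {ω | Real.sqrt z < F ω} G ω := by
    intro ω
    by_cases hcase : F ω ≤ Real.sqrt z
    · have h1 : min (F ω) z ≤ Real.sqrt z := le_trans (min_le_left _ _) hcase
      have h2 : G ω * min (F ω) z ≤ G ω * Real.sqrt z :=
        mul_le_mul_of_nonneg_left h1 (hGnn ω)
      have h3 : 0 ≤ z * Set.indicator {ω | Real.sqrt z < F ω} G ω :=
        mul_nonneg hz0.le (hindnn _ ω)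
      rw [mul_comm (G ω)] at h2
      linarith
    · push_neg at hcase
      have hind : Set.indicator {ω | Real.sqrt z < F ω} G ω = G ω :=
        Set.indicator_of_mem (show ω ∈ {ω | Real.sqrt z < F ω} from hcase) G
      have h1 : G ω * min (F ω) z ≤ G ω * z :=
        mul_le_mul_of_nonneg_left (min_le_right _ _) (hGnn ω)
      have h2 : 0 ≤ Real.sqrt z * G ω := mul_nonneg hsz (hGnn ω)
      rw [hind]
      rw [mul_comm (G ω)] at h1
      linarith
  -- combine
  have hint : ∫ ω, G ω * min (F ω) z ∂ℙ ≤ Real.sqrt z * I + z * H (Real.sqrt z) := by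
    calc ∫ ω, G ω * min (F ω) z ∂ℙ
        ≤ ∫ ω, Real.sqrt z * G ω + z * Set.indicator {ω | Real.sqrt z < F ω} G ω ∂ℙ :=
          integral_mono hLHSint hRHSint hptw
      _ = Real.sqrt z * I + z * H (Real.sqrt z) := by
          rw [integral_add (hGint.const_mul _) ((hHint _).const_mul z),
            integral_const_mul, integral_const_mul]
  have hintnn : 0 ≤ ∫ ω, G ω * min (F ω) z ∂ℙ :=
    integral_nonneg fun ω => mul_nonneg (hGnn ω) (hminnn ω)
  rw [Real.norm_eq_abs, abs_of_nonneg hintnn, Real.norm_eq_abs, abs_of_nonneg hz0.le]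
  have hHsz : H (Real.sqrt z) ≤ ε / 2 := (hc₀ _ hszc₀).le
  have hterm2 : z * H (Real.sqrt z) ≤ ε / 2 * z := by
    have := mul_le_mul_of_nonneg_left hHsz hz0.le
    linarith
  have hterm1 : Real.sqrt z * I ≤ ε / 2 * z := by
    have h1 : 2 * I / ε * Real.sqrt z ≤ Real.sqrt z * Real.sqrt z :=
      mul_le_mul_of_nonneg_right hszI hsz
    rw [hszsq] at h1
    have h2 : 2 * I / ε * Real.sqrt z = 2 / ε * (Real.sqrt z * I) := by ring
    rw [h2] at h1
    -- from 2/ε * (√z * I) ≤ z deduce √z * I ≤ ε/2 * z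
    have h3 : Real.sqrt z * I ≤ ε / 2 * z := by
      have hε' : 0 < 2 / ε := by positivity
      calc Real.sqrt z * I = ε / 2 * (2 / ε * (Real.sqrt z * I)) := by
            field_simp
        _ ≤ ε / 2 * z := mul_le_mul_of_nonneg_left h1 (by positivity)
    exact h3
  linarith

/-- **Lemma 4.2.** Let `1 < α < 2` and let `X, X̃` be nonnegative random variables with
`E(X (log₊ X)^α + X̃ (log₊ X̃)^{α-1}) < ∞`. Then
(i) `E(X (log₊ X̃)^α) < ∞` and `E(X̃ (log₊ X)^{α-1}) < ∞`;
(ii) as `z → ∞`, `E(X (log₊(X+X̃))^α min(log₊(X+X̃), z)) = o(z)` and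
`E(X̃ (log₊(X+X̃))^{α-1} min(log₊(X+X̃), z)) = o(z)`. -/
theorem stmt_16
    {Ω : Type} [MeasureSpace Ω] [IsProbabilityMeasure (ℙ : Measure Ω)]
    (α : ℝ) (hα1 : 1 < α) (hα2 : α < 2)
    (X Xt : Ω → ℝ) (hXmeas : Measurable X) (hXtmeas : Measurable Xt)
    (hXnn : ∀ ω, 0 ≤ X ω) (hXtnn : ∀ ω, 0 ≤ Xt ω)
    (h17 : Integrable (fun ω =>
      X ω * max 0 (Real.log (X ω)) ^ α +
        Xt ω * max 0 (Real.log (Xt ω)) ^ (α - 1)) ℙ) :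
    Integrable (fun ω => X ω * max 0 (Real.log (Xt ω)) ^ α) ℙ ∧
    Integrable (fun ω => Xt ω * max 0 (Real.log (X ω)) ^ (α - 1)) ℙ ∧
    ((fun z : ℝ => ∫ ω, X ω * max 0 (Real.log (X ω + Xt ω)) ^ α *
        min (max 0 (Real.log (X ω + Xt ω))) z ∂ℙ) =o[atTop] fun z : ℝ => z) ∧
    ((fun z : ℝ => ∫ ω, Xt ω * max 0 (Real.log (X ω + Xt ω)) ^ (α - 1) *
        min (max 0 (Real.log (X ω + Xt ω))) z ∂ℙ) =o[atTop] fun z : ℝ => z) := by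
  have hαpos : (0:ℝ) < α := by linarith
  have hβpos : (0:ℝ) ≤ α - 1 := by linarith
  have hlog2 : (0:ℝ) ≤ Real.log 2 := Real.log_nonneg one_le_two
  have m1 : Measurable fun ω => X ω * max 0 (Real.log (X ω)) ^ α :=
    hXmeas.mul (meas_aux hXmeas (by linarith))
  have m2 : Measurable fun ω => Xt ω * max 0 (Real.log (Xt ω)) ^ (α - 1) :=
    hXtmeas.mul (meas_aux hXtmeas (by linarith))
  have nn1 : ∀ ω, 0 ≤ X ω * max 0 (Real.log (X ω)) ^ α := fun ω =>
    mul_nonneg (hXnn ω) (Real.rpow_nonneg (le_max_left _ _) _)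
  have nn2 : ∀ ω, 0 ≤ Xt ω * max 0 (Real.log (Xt ω)) ^ (α - 1) := fun ω =>
    mul_nonneg (hXtnn ω) (Real.rpow_nonneg (le_max_left _ _) _)
  have hX1 : Integrable (fun ω => X ω * max 0 (Real.log (X ω)) ^ α) ℙ := by
    apply h17.mono' m1.aestronglyMeasurable
    apply ae_of_all _ fun ω => ?_
    rw [Real.norm_eq_abs, abs_of_nonneg (nn1 ω)]
    linarith [nn2 ω]
  have hXt1 : Integrable (fun ω => Xt ω * max 0 (Real.log (Xt ω)) ^ (α - 1)) ℙ := by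
    apply h17.mono' m2.aestronglyMeasurable
    apply ae_of_all _ fun ω => ?_
    rw [Real.norm_eq_abs, abs_of_nonneg (nn2 ω)]
    linarith [nn1 ω]
  -- integrability of X and Xt
  have hXint : Integrable X ℙ := by
    apply Integrable.mono' ((integrable_const (Real.exp 1)).add hX1)
      hXmeas.aestronglyMeasurable
    apply ae_of_all _ fun ω => ?_
    rw [Real.norm_eq_abs, abs_of_nonneg (hXnn ω)]
    simp only [Pi.add_apply]
    by_cases h : Real.exp 1 ≤ X ω
    · have h1 : (1:ℝ) ≤ max 0 (Real.log (X ω)) := by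
        have := sL_mono (Real.exp_pos 1).le h
        have h2 : sL (Real.exp 1) = 1 := by
          simp only [sL, Real.log_exp]
          exact max_eq_right zero_le_one
        rw [h2] at this; exact this
      have h2 : (1:ℝ) ≤ max 0 (Real.log (X ω)) ^ α := Real.one_le_rpow h1 hαpos.le
      have h3 := le_mul_of_one_le_right (hXnn ω) h2
      linarith [Real.exp_pos 1]
    · push_neg at h
      linarith [nn1 ω]
  have hXtint : Integrable Xt ℙ := by
    apply Integrable.mono' ((integrable_const (Real.exp 1)).add hXt1)
      hXtmeas.aestronglyMeasurable
    apply ae_of_all _ fun ω => ?_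
    rw [Real.norm_eq_abs, abs_of_nonneg (hXtnn ω)]
    simp only [Pi.add_apply]
    by_cases h : Real.exp 1 ≤ Xt ω
    · have h1 : (1:ℝ) ≤ max 0 (Real.log (Xt ω)) := by
        have := sL_mono (Real.exp_pos 1).le h
        have h2 : sL (Real.exp 1) = 1 := by
          simp only [sL, Real.log_exp]
          exact max_eq_right zero_le_one
        rw [h2] at this; exact this
      have h2 : (1:ℝ) ≤ max 0 (Real.log (Xt ω)) ^ (α-1) := Real.one_le_rpow h1 hβpos
      have h3 := le_mul_of_one_le_right (hXtnn ω) h2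
      linarith [Real.exp_pos 1]
    · push_neg at h
      linarith [nn2 ω]
  -- part (i)
  have mI1 : Measurable fun ω => X ω * max 0 (Real.log (Xt ω)) ^ α :=
    hXmeas.mul (meas_aux hXtmeas (by linarith))
  have mI2 : Measurable fun ω => Xt ω * max 0 (Real.log (X ω)) ^ (α - 1) :=
    hXtmeas.mul (meas_aux hXmeas (by linarith))
  have hI1 : Integrable (fun ω => X ω * max 0 (Real.log (Xt ω)) ^ α) ℙ := by
    apply Integrable.mono' ((h17.add hXint).const_mul (Real.exp 8))
      mI1.aestronglyMeasurable
    apply ae_of_all _ fun ω => ?_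
    rw [Real.norm_eq_abs,
      abs_of_nonneg (mul_nonneg (hXnn ω) (Real.rpow_nonneg (le_max_left _ _) _))]
    simp only [Pi.add_apply]
    exact key1 hα1 hα2 (hXnn ω) (hXtnn ω)
  have hI2 : Integrable (fun ω => Xt ω * max 0 (Real.log (X ω)) ^ (α - 1)) ℙ := by
    apply Integrable.mono' ((hXt1.add hX1).add hXint) mI2.aestronglyMeasurable
    apply ae_of_all _ fun ω => ?_
    rw [Real.norm_eq_abs,
      abs_of_nonneg (mul_nonneg (hXtnn ω) (Real.rpow_nonneg (le_max_left _ _) _))]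
    simp only [Pi.add_apply]
    exact key2 hα1 (hXtnn ω) (hXnn ω)
  refine ⟨hI1, hI2, ?_, ?_⟩
  -- part (ii), first little-o
  · have hG1meas : Measurable fun ω => X ω * max 0 (Real.log (X ω + Xt ω)) ^ α :=
      hXmeas.mul (meas_aux (hXmeas.add hXtmeas) (by linarith))
    have hFmeas : Measurable fun ω => max 0 (Real.log (X ω + Xt ω)) :=
      measurable_const.max (Real.measurable_log.comp (hXmeas.add hXtmeas))
    have hFnn : ∀ ω, (0:ℝ) ≤ max 0 (Real.log (X ω + Xt ω)) := fun ω => le_max_left _ _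
    have hG1nn : ∀ ω, 0 ≤ X ω * max 0 (Real.log (X ω + Xt ω)) ^ α := fun ω =>
      mul_nonneg (hXnn ω) (Real.rpow_nonneg (hFnn ω) _)
    have hG1int : Integrable (fun ω => X ω * max 0 (Real.log (X ω + Xt ω)) ^ α) ℙ := by
      have hg : Integrable (fun ω => (3:ℝ) ^ α * (Real.log 2 ^ α * X ω +
          X ω * max 0 (Real.log (X ω)) ^ α + X ω * max 0 (Real.log (Xt ω)) ^ α)) ℙ := by
        exact (((hXint.const_mul (Real.log 2 ^ α)).add hX1).add hI1).const_mul ((3:ℝ) ^ α)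
      apply Integrable.mono' hg hG1meas.aestronglyMeasurable
      apply ae_of_all _ fun ω => ?_
      rw [Real.norm_eq_abs, abs_of_nonneg (hG1nn ω)]
      have h1 : max 0 (Real.log (X ω + Xt ω)) ≤
          Real.log 2 + max 0 (Real.log (X ω)) + max 0 (Real.log (Xt ω)) :=
        sL_add_le (hXnn ω) (hXtnn ω)
      have h2 : max 0 (Real.log (X ω + Xt ω)) ^ α ≤
          (Real.log 2 + max 0 (Real.log (X ω)) + max 0 (Real.log (Xt ω))) ^ α :=
        Real.rpow_le_rpow (hFnn ω) h1 hαpos.le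
      have h3 := rpow_sum3_le hlog2 (sL_nonneg (X ω)) (sL_nonneg (Xt ω)) hαpos.le
      calc X ω * max 0 (Real.log (X ω + Xt ω)) ^ α
          ≤ X ω * ((3:ℝ) ^ α * (Real.log 2 ^ α + max 0 (Real.log (X ω)) ^ α +
              max 0 (Real.log (Xt ω)) ^ α)) :=
            mul_le_mul_of_nonneg_left (h2.trans h3) (hXnn ω)
        _ = (3:ℝ) ^ α * (Real.log 2 ^ α * X ω + X ω * max 0 (Real.log (X ω)) ^ α +
              X ω * max 0 (Real.log (Xt ω)) ^ α) := by ring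
    exact littleO_min (fun ω => X ω * max 0 (Real.log (X ω + Xt ω)) ^ α)
      (fun ω => max 0 (Real.log (X ω + Xt ω))) hG1meas hFmeas hG1nn hFnn hG1int
  -- part (ii), second little-o
  · have hG2meas : Measurable fun ω => Xt ω * max 0 (Real.log (X ω + Xt ω)) ^ (α-1) :=
      hXtmeas.mul (meas_aux (hXmeas.add hXtmeas) (by linarith))
    have hFmeas : Measurable fun ω => max 0 (Real.log (X ω + Xt ω)) :=
      measurable_const.max (Real.measurable_log.comp (hXmeas.add hXtmeas))
    have hFnn : ∀ ω, (0:ℝ) ≤ max 0 (Real.log (X ω + Xt ω)) := fun ω => le_max_left _ _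
    have hG2nn : ∀ ω, 0 ≤ Xt ω * max 0 (Real.log (X ω + Xt ω)) ^ (α-1) := fun ω =>
      mul_nonneg (hXtnn ω) (Real.rpow_nonneg (hFnn ω) _)
    have hG2int : Integrable (fun ω => Xt ω * max 0 (Real.log (X ω + Xt ω)) ^ (α-1)) ℙ := by
      have hg : Integrable (fun ω => (3:ℝ) ^ (α-1) * (Real.log 2 ^ (α-1) * Xt ω +
          Xt ω * max 0 (Real.log (X ω)) ^ (α-1) +
          Xt ω * max 0 (Real.log (Xt ω)) ^ (α-1))) ℙ := by
        exact (((hXtint.const_mul (Real.log 2 ^ (α-1))).add hI2).add hXt1).const_mul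
          ((3:ℝ) ^ (α-1))
      apply Integrable.mono' hg hG2meas.aestronglyMeasurable
      apply ae_of_all _ fun ω => ?_
      rw [Real.norm_eq_abs, abs_of_nonneg (hG2nn ω)]
      have h1 : max 0 (Real.log (X ω + Xt ω)) ≤
          Real.log 2 + max 0 (Real.log (X ω)) + max 0 (Real.log (Xt ω)) :=
        sL_add_le (hXnn ω) (hXtnn ω)
      have h2 : max 0 (Real.log (X ω + Xt ω)) ^ (α-1) ≤
          (Real.log 2 + max 0 (Real.log (X ω)) + max 0 (Real.log (Xt ω))) ^ (α-1) :=
        Real.rpow_le_rpow (hFnn ω) h1 hβpos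
      have h3 := rpow_sum3_le hlog2 (sL_nonneg (X ω)) (sL_nonneg (Xt ω)) hβpos
      calc Xt ω * max 0 (Real.log (X ω + Xt ω)) ^ (α-1)
          ≤ Xt ω * ((3:ℝ) ^ (α-1) * (Real.log 2 ^ (α-1) + max 0 (Real.log (X ω)) ^ (α-1) +
              max 0 (Real.log (Xt ω)) ^ (α-1))) :=
            mul_le_mul_of_nonneg_left (h2.trans h3) (hXtnn ω)
        _ = (3:ℝ) ^ (α-1) * (Real.log 2 ^ (α-1) * Xt ω +
              Xt ω * max 0 (Real.log (X ω)) ^ (α-1) +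
              Xt ω * max 0 (Real.log (Xt ω)) ^ (α-1)) := by ring
    exact littleO_min (fun ω => Xt ω * max 0 (Real.log (X ω + Xt ω)) ^ (α-1))
      (fun ω => max 0 (Real.log (X ω + Xt ω))) hG2meas hFmeas hG2nn hFnn hG2int
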